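/- arXiv:1706.06618 — 3 statements merged into one kernel-verified Lean document; each statement's English description precedes it below -/
import Mathlib

section
/- Suppose g(t) ∈ ℚ(t) is a non-zero rational function. Then v_p(g(p)) = v_t(g(t)) for all but finitely many primes p. (Here, for all but finitely many primes p, g has no pole at p so g(p) ∈ ℚ is defined and non-zero.) -/
/-- The `t`-adic valuation of a (nonzero) rational function `g ∈ ℚ(t)`: the order of
vanishing of `g` at `t = 0` (negative if `g` has a pole at `0`). It is computed from
the reduced fraction `g = num/denom` as the difference of the multiplicities of the
root `0` in the numerator and the denominator. -/
noncomputable def tAdicVal (g : RatFunc ℚ) : ℤ :=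
  (g.num.rootMultiplicity 0 : ℤ) - (g.denom.rootMultiplicity 0 : ℤ)


open Polynomial

lemma int_not_dvd_eval {H : Polynomial ℤ} (h0 : H.eval 0 ≠ 0) {p : ℕ} (hp : p.Prime)
    (hlt : (H.eval 0).natAbs < p) : ¬ (p : ℤ) ∣ H.eval (p : ℤ) := by
  intro hdvd
  have hsub : (p : ℤ) ∣ H.eval (p : ℤ) - H.eval 0 := by
    have := Polynomial.sub_dvd_eval_sub (p : ℤ) 0 H
    simpa using this
  have : (p : ℤ) ∣ H.eval 0 := (dvd_sub_right hdvd).mp hsub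
  have h1 : (p : ℤ) ≤ |H.eval 0| := Int.le_of_dvd (abs_pos.mpr h0) ((dvd_abs _ _).mpr this)
  rw [Int.abs_eq_natAbs] at h1
  exact absurd (Int.ofNat_le.mp h1) (not_le.mpr hlt)

lemma int_not_dvd_of_natAbs_lt {d : ℤ} (hd : d ≠ 0) {p : ℕ} (hlt : d.natAbs < p) :
    ¬ (p : ℤ) ∣ d := by
  intro h
  have h1 : (p : ℤ) ≤ |d| := Int.le_of_dvd (abs_pos.mpr hd) ((dvd_abs _ _).mpr h)
  rw [Int.abs_eq_natAbs] at h1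
  exact absurd (Int.ofNat_le.mp h1) (not_le.mpr hlt)

lemma poly_padicValRat (f : Polynomial ℚ) (hf : f ≠ 0) :
    ∃ P : ℕ, ∀ p : ℕ, p.Prime → P < p →
      f.eval (p : ℚ) ≠ 0 ∧ padicValRat p (f.eval (p : ℚ)) = f.rootMultiplicity 0 := by
  set k := f.rootMultiplicity 0 with hk
  set h := f /ₘ (X - C 0) ^ k with hh
  have h0 : h.eval 0 ≠ 0 := Polynomial.eval_divByMonic_pow_rootMultiplicity_ne_zero 0 hf
  have hfeq : (X - C 0) ^ k * h = f := Polynomial.pow_mul_divByMonic_rootMultiplicity_eq f 0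
  obtain ⟨b, hb⟩ := IsLocalization.integerNormalization_map_to_map (nonZeroDivisors ℤ)
    (h : Polynomial ℚ)
  set H := IsLocalization.integerNormalization (nonZeroDivisors ℤ) h with hH
  set d := (b : ℤ) with hd
  have hdne : d ≠ 0 := nonZeroDivisors.coe_ne_zero b
  have hmap : ∀ n : ℤ, ((H.eval n : ℤ) : ℚ) = (d : ℚ) * h.eval (n : ℚ) := by
    intro n
    have := Polynomial.eval_intCast_map (algebraMap ℤ ℚ) H n
    rw [hb] at this
    simpa [algebraMap_int_eq, zsmul_eq_mul] using this.symm
  have hH0 : H.eval 0 ≠ 0 := by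
    intro hcon
    have := hmap 0
    rw [hcon] at this
    simp only [Int.cast_zero, Int.cast_natCast] at this
    exact h0 (by
      have hd' : (d : ℚ) ≠ 0 := Int.cast_ne_zero.mpr hdne
      rcases mul_eq_zero.mp this.symm with h1 | h1
      · exact absurd h1 hd'
      · exact h1)
  refine ⟨max (H.eval 0).natAbs d.natAbs, fun p hp hP => ?_⟩
  haveI : Fact p.Prime := ⟨hp⟩
  have hlt1 : (H.eval 0).natAbs < p := lt_of_le_of_lt (le_max_left _ _) hP
  have hlt2 : d.natAbs < p := lt_of_le_of_lt (le_max_right _ _) hP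
  have hndvdH : ¬ (p : ℤ) ∣ H.eval (p : ℤ) := int_not_dvd_eval hH0 hp hlt1
  have hndvdd : ¬ (p : ℤ) ∣ d := int_not_dvd_of_natAbs_lt hdne hlt2
  have hHp : H.eval (p : ℤ) ≠ 0 := fun hcon => hndvdH (hcon ▸ dvd_zero _)
  have hdq : (d : ℚ) ≠ 0 := Int.cast_ne_zero.mpr hdne
  have hhp : h.eval ((p : ℤ) : ℚ) ≠ 0 := by
    intro hcon
    have := hmap (p : ℤ)
    rw [hcon, mul_zero] at this
    exact hHp (Int.cast_injective (α := ℚ) (by simpa using this))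
  have hhp' : h.eval (p : ℚ) ≠ 0 := by simpa using hhp
  have hpq : ((p : ℚ)) ≠ 0 := Nat.cast_ne_zero.mpr hp.ne_zero
  have hfeval : f.eval (p : ℚ) = (p : ℚ) ^ k * h.eval (p : ℚ) := by
    rw [← hfeq]; simp [Polynomial.eval_mul, Polynomial.eval_pow]
  have hfne : f.eval (p : ℚ) ≠ 0 := by
    rw [hfeval]; exact mul_ne_zero (pow_ne_zero _ hpq) hhp'
  refine ⟨hfne, ?_⟩
  rw [hfeval, padicValRat.mul (pow_ne_zero _ hpq) hhp', padicValRat.pow (p : ℚ),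
    padicValRat.self hp.one_lt]
  have hval_h : padicValRat p (h.eval (p : ℚ)) = 0 := by
    have heq : h.eval (p : ℚ) = ((H.eval (p : ℤ) : ℤ) : ℚ) / (d : ℚ) := by
      rw [hmap (p : ℤ)]
      push_cast
      field_simp
    rw [heq, padicValRat.div (Int.cast_ne_zero.mpr hHp) hdq, padicValRat.of_int,
      padicValRat.of_int, padicValInt.eq_zero_of_not_dvd hndvdH,
      padicValInt.eq_zero_of_not_dvd hndvdd]
    simp
  rw [hval_h]
  simp

/-- If `g ∈ ℚ(t)` is a nonzero rational function, then for all but finitely many primes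
`p`, `g` has no pole at `p` (so `g(p)` is a well-defined nonzero rational number) and
`v_p(g(p)) = v_t(g)`. -/
theorem padicValRat_eval_eq_tAdicVal (g : RatFunc ℚ) (hg : g ≠ 0) :
    ∃ P : ℕ, ∀ p : ℕ, p.Prime → P < p →
      g.denom.eval (p : ℚ) ≠ 0 ∧
      g.eval (RingHom.id ℚ) (p : ℚ) ≠ 0 ∧
      padicValRat p (g.eval (RingHom.id ℚ) (p : ℚ)) = tAdicVal g := by
  have hnum : g.num ≠ 0 := RatFunc.num_ne_zero hg
  obtain ⟨P1, h1⟩ := poly_padicValRat g.num hnum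
  obtain ⟨P2, h2⟩ := poly_padicValRat g.denom (g.denom_ne_zero)
  refine ⟨max P1 P2, fun p hp hP => ?_⟩
  haveI : Fact p.Prime := ⟨hp⟩
  obtain ⟨hn1, hn2⟩ := h1 p hp (lt_of_le_of_lt (le_max_left _ _) hP)
  obtain ⟨hd1, hd2⟩ := h2 p hp (lt_of_le_of_lt (le_max_right _ _) hP)
  have heval : g.eval (RingHom.id ℚ) (p : ℚ) = g.num.eval (p : ℚ) / g.denom.eval (p : ℚ) := by
    rfl
  refine ⟨hd1, ?_, ?_⟩
  · rw [heval]; exact div_ne_zero hn1 hd1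
  · rw [heval, padicValRat.div hn1 hd1, hn2, hd2, tAdicVal]
end

section
/- (Kummer's congruence.) Let p be a prime and k ≥ 1 an integer. Let m, n be positive even integers not divisible by p − 1 with m ≡ n (mod φ(p^k)), where φ is Euler's totient function. Then (1 − p^{m−1})·B_m/m ≡ (1 − p^{n−1})·B_n/n (mod p^k), i.e. v_p( (1 − p^{m−1})·B_m/m − (1 − p^{n−1})·B_n/n ) ≥ k. -/
open Finset

namespace KummerAux

/-- The set of naturals below `N` not divisible by `p`. -/
def F (p N : ℕ) : Finset ℕ := (Finset.range N).filter (fun a => ¬ p ∣ a)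

/-- Power sum. -/
def S (m N : ℕ) : ℕ := ∑ a ∈ Finset.range N, a ^ m

/-- Restricted power sum. -/
def T (p m N : ℕ) : ℕ := ∑ a ∈ F p N, a ^ m

/-- The twisted sum. -/
def U (p c m N : ℕ) : ℕ := ∑ a ∈ F p N, ((c * a) % N) ^ (m - 1) * ((c * a) / N)

variable {p : ℕ}

lemma sq_dvd_aux (x y : ℤ) (e : ℕ) :
    y ^ 2 ∣ (x + y) ^ (e + 1) - x ^ (e + 1) - (e + 1 : ℕ) * x ^ e * y := by
  induction e with
  | zero => push_cast; ring_nf; simp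
  | succ e ih =>
    obtain ⟨z, hz⟩ := ih
    exact ⟨(e + 1 : ℕ) * x ^ e + (x + y) * z, by push_cast at hz ⊢; linear_combination (x + y) * hz⟩

section padic

variable [hp : Fact p.Prime]

lemma sum_norm_le {α : Type*} (s : Finset α) (f : α → ℚ_[p]) {C : ℝ} (hC : 0 ≤ C)
    (h : ∀ i ∈ s, ‖f i‖ ≤ C) : ‖∑ i ∈ s, f i‖ ≤ C := by
  classical
  induction s using Finset.induction with
  | empty => simpa using hC
  | insert _ _ hx ih =>
    rename_i a s'
    rw [Finset.sum_insert hx]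
    exact le_trans (Padic.nonarchimedean _ _)
      (max_le (h _ (Finset.mem_insert_self _ _)) (ih fun i hi => h _ (Finset.mem_insert_of_mem hi)))

lemma norm_natCast_le_one (n : ℕ) : ‖(n : ℚ_[p])‖ ≤ 1 := by
  have := Padic.norm_int_le_one (p := p) (n : ℤ)
  push_cast at this; exact this

lemma norm_intCast_eq_one {z : ℤ} (h : ¬ (p : ℤ) ∣ z) : ‖(z : ℚ_[p])‖ = 1 := by
  refine le_antisymm (Padic.norm_int_le_one z) ?_
  by_contra hlt
  push_neg at hlt
  exact h (Padic.norm_intCast_lt_one_iff.mp hlt)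

lemma norm_natCast_eq_one {z : ℕ} (h : ¬ p ∣ z) : ‖(z : ℚ_[p])‖ = 1 := by
  have := norm_intCast_eq_one (p := p) (z := (z : ℤ)) (by exact_mod_cast h)
  push_cast at this; exact this

lemma norm_natCast_eq {n : ℕ} (hn : n ≠ 0) :
    ‖(n : ℚ_[p])‖ = (p : ℝ) ^ (-(padicValNat p n : ℤ)) := by
  conv_lhs => rw [← Nat.ordProj_mul_ordCompl_eq_self n p]
  push_cast
  rw [norm_mul, Padic.norm_p_pow,
    norm_natCast_eq_one (Nat.not_dvd_ordCompl hp.out hn), mul_one,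
    Nat.factorization_def n hp.out]
  simp [padicValRat.of_nat]

/-- Valuation bound: `v_p(t) ≤ t - 1`. -/
lemma pow_le (ht : t ≠ 0) : p ^ padicValNat p t ≤ t :=
  Nat.le_of_dvd (Nat.pos_of_ne_zero ht) pow_padicValNat_dvd

lemma val_le_sub_one {t : ℕ} (ht : 1 ≤ t) : (padicValNat p t : ℤ) + 1 ≤ t := by
  have h1 : p ^ padicValNat p t ≤ t := Nat.le_of_dvd ht pow_padicValNat_dvd
  have h2 : 2 ^ padicValNat p t ≤ p ^ padicValNat p t :=
    Nat.pow_le_pow_left hp.out.two_le _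
  have h3 : padicValNat p t < 2 ^ padicValNat p t := Nat.lt_two_pow_self
  omega

/-- Valuation bound for `p ≥ 5`: `v_p(t) ≤ t - 2`. -/
lemma val_le_sub_two (hp5 : 5 ≤ p) {t : ℕ} (ht : 2 ≤ t) : (padicValNat p t : ℤ) + 2 ≤ t := by
  set v := padicValNat p t with hv
  rcases Nat.eq_zero_or_pos v with h0 | h1
  · omega
  · have h1' : p ^ v ≤ t := Nat.le_of_dvd (by omega) pow_padicValNat_dvd
    have h2 : 5 ^ v ≤ p ^ v := Nat.pow_le_pow_left hp5 _
    have h3 : 5 * v ≤ 5 ^ v := by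
      calc 5 * v ≤ 5 * 5 ^ (v - 1) := by
            have := Nat.lt_two_pow_self (n := v - 1)
            have h4 : 2 ^ (v-1) ≤ 5 ^ (v-1) := Nat.pow_le_pow_left (by norm_num) _
            omega
        _ = 5 ^ (v - 1 + 1) := by ring
        _ = 5 ^ v := by congr 1; omega
    omega

/-- Quantitative Faulhaber estimate. -/
lemma faulhaber_bound (m K : ℕ) (E : ℤ)
    (hb : ∀ j, j < m → ‖((bernoulli j : ℚ) : ℚ_[p])‖ ≤ p)
    (hE : ∀ t : ℕ, 2 ≤ t → t ≤ m + 1 → (1 : ℤ) + padicValNat p t - K * t ≤ E)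
    (hE0 : (0:ℝ) ≤ (p:ℝ) ^ E) :
    ‖(S m (p ^ K) : ℚ_[p]) - ((bernoulli m : ℚ) : ℚ_[p]) * (p : ℚ_[p]) ^ K‖ ≤ (p : ℝ) ^ E := by
  have hp0 : (0:ℝ) < p := by exact_mod_cast hp.out.pos
  have hp1 : (1:ℝ) ≤ p := by exact_mod_cast hp.out.one_le
  have hq := _root_.sum_range_pow (p ^ K) m
  have hq2 := congrArg (fun q : ℚ => (q : ℚ_[p])) hq
  push_cast at hq2
  have hS : (S m (p ^ K) : ℚ_[p]) = ∑ a ∈ Finset.range (p ^ K), (a : ℚ_[p]) ^ m := by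
    unfold S; push_cast; ring
  rw [Finset.sum_range_succ] at hq2
  have hlast : ((bernoulli m : ℚ) : ℚ_[p]) * ((m + 1).choose m : ℕ) *
      ((p : ℚ_[p]) ^ K) ^ (m + 1 - m) / ((m : ℚ_[p]) + 1)
      = ((bernoulli m : ℚ) : ℚ_[p]) * (p : ℚ_[p]) ^ K := by
    have h1 : (m + 1).choose m = m + 1 := Nat.choose_succ_self_right m
    have h2 : m + 1 - m = 1 := by omega
    have h3 : ((m : ℚ_[p]) + 1) ≠ 0 := by exact_mod_cast (Nat.cast_ne_zero (R := ℚ_[p])).mpr (Nat.succ_ne_zero m)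
    rw [h1, h2]
    push_cast
    field_simp
  have hdiff : (S m (p ^ K) : ℚ_[p]) - ((bernoulli m : ℚ) : ℚ_[p]) * (p : ℚ_[p]) ^ K
      = ∑ i ∈ Finset.range m, ((bernoulli i : ℚ) : ℚ_[p]) * ((m + 1).choose i : ℕ) *
          ((p : ℚ_[p]) ^ K) ^ (m + 1 - i) / ((m : ℚ_[p]) + 1) := by
    rw [hS, hq2, hlast]; ring
  rw [hdiff]
  refine sum_norm_le _ _ hE0 ?_
  intro i hi
  have him : i < m := Finset.mem_range.mp hi
  set t : ℕ := m + 1 - i with hti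
  have ht2 : 2 ≤ t := by omega
  have htm : t ≤ m + 1 := by omega
  have ht0 : t ≠ 0 := by omega
  have hm10 : ((m : ℚ_[p]) + 1) ≠ 0 := by
    exact_mod_cast (Nat.cast_ne_zero (R := ℚ_[p])).mpr (Nat.succ_ne_zero m)
  have ht0' : ((t : ℚ_[p])) ≠ 0 := (Nat.cast_ne_zero (R := ℚ_[p])).mpr ht0
  have hch : ((m + 1).choose i : ℚ_[p]) * (t : ℚ_[p]) = (m.choose i : ℚ_[p]) * ((m : ℚ_[p]) + 1) := by
    have := Nat.choose_mul_succ_eq m i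
    have h' : (m.choose i * (m + 1) : ℕ) = ((m+1).choose i * t : ℕ) := by rw [this]
    exact_mod_cast h'.symm
  have hterm : ((bernoulli i : ℚ) : ℚ_[p]) * ((m + 1).choose i : ℕ) *
        ((p : ℚ_[p]) ^ K) ^ (m + 1 - i) / ((m : ℚ_[p]) + 1)
      = ((bernoulli i : ℚ) : ℚ_[p]) * (m.choose i : ℕ) * ((p : ℚ_[p]) ^ (K * t)) / (t : ℚ_[p]) := by
    rw [div_eq_div_iff hm10 ht0', ← pow_mul]
    push_cast
    linear_combination ((bernoulli i : ℚ) : ℚ_[p]) * ((p : ℚ_[p]) ^ (K * t)) * hch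
  rw [hterm]
  have hX : ‖(p : ℚ_[p]) ^ (K * t)‖ = (p : ℝ) ^ (-(K * t : ℤ)) := by
    rw [Padic.norm_p_pow]; norm_cast
  have hT : ‖((t : ℕ) : ℚ_[p])‖ = (p : ℝ) ^ (-(padicValNat p t : ℤ)) := norm_natCast_eq ht0
  calc ‖((bernoulli i : ℚ) : ℚ_[p]) * (m.choose i : ℕ) * ((p : ℚ_[p]) ^ (K * t)) / (t : ℚ_[p])‖
      = ‖((bernoulli i : ℚ) : ℚ_[p])‖ * ‖((m.choose i : ℕ) : ℚ_[p])‖ *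
        ((p:ℝ) ^ (-(K * t : ℤ))) * ((p:ℝ) ^ (-(padicValNat p t : ℤ)))⁻¹ := by
        rw [norm_div, norm_mul, norm_mul, hX, hT]; ring
    _ ≤ (p:ℝ) ^ (1:ℤ) * 1 * ((p:ℝ) ^ (-(K * t : ℤ))) * ((p:ℝ) ^ (-(padicValNat p t : ℤ)))⁻¹ := by
        have hB : ‖((bernoulli i : ℚ) : ℚ_[p])‖ ≤ (p:ℝ) ^ (1:ℤ) := by
          rw [zpow_one]; exact hb i him
        have hC : ‖((m.choose i : ℕ) : ℚ_[p])‖ ≤ 1 := norm_natCast_le_one _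
        have h0 : (0:ℝ) ≤ ((p:ℝ) ^ (-(K * t : ℤ))) * ((p:ℝ) ^ (-(padicValNat p t : ℤ)))⁻¹ := by
          positivity
        calc ‖((bernoulli i : ℚ) : ℚ_[p])‖ * ‖((m.choose i : ℕ) : ℚ_[p])‖ *
              ((p:ℝ) ^ (-(K * t : ℤ))) * ((p:ℝ) ^ (-(padicValNat p t : ℤ)))⁻¹
            = (‖((bernoulli i : ℚ) : ℚ_[p])‖ * ‖((m.choose i : ℕ) : ℚ_[p])‖) *
              (((p:ℝ) ^ (-(K * t : ℤ))) * ((p:ℝ) ^ (-(padicValNat p t : ℤ)))⁻¹) := by ring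
          _ ≤ ((p:ℝ) ^ (1:ℤ) * 1) *
              (((p:ℝ) ^ (-(K * t : ℤ))) * ((p:ℝ) ^ (-(padicValNat p t : ℤ)))⁻¹) := by
              apply mul_le_mul_of_nonneg_right _ h0
              exact mul_le_mul hB hC (norm_nonneg _) (by positivity)
          _ = (p:ℝ) ^ (1:ℤ) * 1 * ((p:ℝ) ^ (-(K * t : ℤ))) * ((p:ℝ) ^ (-(padicValNat p t : ℤ)))⁻¹ := by
              ring
    _ = (p:ℝ) ^ ((1 : ℤ) + padicValNat p t - K * t) := by
        rw [mul_one, ← zpow_neg, ← zpow_add₀ (ne_of_gt hp0), ← zpow_add₀ (ne_of_gt hp0)]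
        congr 1
        push_cast
        ring
    _ ≤ (p:ℝ) ^ E := zpow_le_zpow_right₀ hp1 (hE t ht2 htm)

/-- von Staudt-type bound `‖B_i‖ ≤ p`. -/
lemma bernoulli_norm_le (i : ℕ) : ‖((bernoulli i : ℚ) : ℚ_[p])‖ ≤ p := by
  have hp0 : (0:ℝ) < p := by exact_mod_cast hp.out.pos
  induction i using Nat.strong_induction_on with
  | _ i IH =>
    have hE : ∀ t : ℕ, 2 ≤ t → t ≤ i + 1 → (1 : ℤ) + padicValNat p t - 1 * t ≤ 0 := by
      intro t ht _
      have := val_le_sub_one (p := p) (t := t) (by omega)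
      omega
    have h := faulhaber_bound (p := p) i 1 0 (fun j hj => IH j hj) hE (by norm_num)
    have hs : ‖((S i (p ^ 1) : ℕ) : ℚ_[p])‖ ≤ 1 := norm_natCast_le_one _
    rw [zpow_zero] at h
    have hBP : ‖((bernoulli i : ℚ) : ℚ_[p]) * (p : ℚ_[p]) ^ 1‖ ≤ 1 := by
      have heq : ((bernoulli i : ℚ) : ℚ_[p]) * (p : ℚ_[p]) ^ 1 =
          (((bernoulli i : ℚ) : ℚ_[p]) * (p : ℚ_[p]) ^ 1 - ((S i (p ^ 1) : ℕ) : ℚ_[p]))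
            + ((S i (p ^ 1) : ℕ) : ℚ_[p]) := by ring
      rw [heq]
      refine le_trans (Padic.nonarchimedean _ _) (max_le ?_ hs)
      rw [norm_sub_rev]
      exact h
    rw [norm_mul, pow_one, Padic.norm_p] at hBP
    calc ‖((bernoulli i : ℚ) : ℚ_[p])‖ = ‖((bernoulli i : ℚ) : ℚ_[p])‖ * (p:ℝ)⁻¹ * p := by
          field_simp
      _ ≤ 1 * p := mul_le_mul_of_nonneg_right hBP (le_of_lt hp0)
      _ = p := one_mul _

end padic

lemma T_eq (hp : p.Prime) (m K : ℕ) (hK : 1 ≤ K) :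
    S m (p ^ K) = T p m (p ^ K) + p ^ m * S m (p ^ (K - 1)) := by
  have hp0 : 0 < p := hp.pos
  unfold S T F
  rw [← Finset.sum_filter_add_sum_filter_not (Finset.range (p ^ K)) (fun a => ¬ p ∣ a)]
  congr 1
  have hb : ∑ a ∈ (Finset.range (p ^ K)).filter (fun a => ¬¬ p ∣ a), a ^ m
      = ∑ b ∈ Finset.range (p ^ (K - 1)), (p * b) ^ m := by
    refine Finset.sum_nbij' (fun a => a / p) (fun b => p * b) ?_ ?_ ?_ ?_ ?_
    · intro a ha
      simp only [Finset.mem_filter, Finset.mem_range, not_not] at ha ⊢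
      obtain ⟨haK, b, rfl⟩ := ha
      rw [Nat.mul_div_cancel_left b hp0]
      have : p ^ K = p ^ (K - 1) * p := by
        rw [← pow_succ]; congr 1; omega
      rw [this, mul_comm p b] at haK
      exact Nat.lt_of_mul_lt_mul_right haK
    · intro b hb
      simp only [Finset.mem_filter, Finset.mem_range, not_not] at hb ⊢
      constructor
      · have : p ^ K = p * p ^ (K - 1) := by
          rw [← pow_succ']; congr 1; omega
        rw [this]
        exact (Nat.mul_lt_mul_left hp0).mpr hb
      · exact Dvd.intro b rfl
    · intro a ha
      simp only [Finset.mem_filter, Finset.mem_range, not_not] at ha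
      exact Nat.mul_div_cancel' ha.2 
    · intro b _
      show p * b / p = b
      rw [Nat.mul_div_cancel_left b hp0]
    · intro a ha
      simp only [Finset.mem_filter, Finset.mem_range, not_not] at ha
      rw [Nat.mul_div_cancel' ha.2]
  rw [hb, Finset.mul_sum]
  congr 1
  ext b
  rw [mul_pow]

section padic2

variable [hp : Fact p.Prime]

lemma T_bound (hp5 : 5 ≤ p) (m K : ℕ) (hm : 2 ≤ m) (hK : 1 ≤ K) :
    ‖(T p m (p ^ K) : ℚ_[p]) -
        (1 - (p : ℚ_[p]) ^ (m - 1)) * ((bernoulli m : ℚ) : ℚ_[p]) * (p : ℚ_[p]) ^ K‖ ≤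
      (p : ℝ) ^ (1 - 2 * (K : ℤ)) := by
  have hp0 : (0:ℝ) < p := by exact_mod_cast hp.out.pos
  have hp1 : (1:ℝ) ≤ p := by exact_mod_cast hp.out.one_le
  have hb : ∀ j, j < m → ‖((bernoulli j : ℚ) : ℚ_[p])‖ ≤ p := fun j _ => bernoulli_norm_le j
  have hBm : ‖((bernoulli m : ℚ) : ℚ_[p])‖ ≤ p := bernoulli_norm_le m
  have hnonarch : ∀ x y : ℚ_[p], ‖x - y‖ ≤ max ‖x‖ ‖y‖ := by
    intro x y
    rw [sub_eq_add_neg]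
    simpa [norm_neg] using Padic.nonarchimedean x (-y)
  have hE1 : ∀ t : ℕ, 2 ≤ t → t ≤ m + 1 → (1 : ℤ) + padicValNat p t - K * t ≤ 1 - 2 * K := by
    intro t ht _
    have h1 := val_le_sub_two (p := p) hp5 ht
    have h2 : (1:ℤ) ≤ K := by exact_mod_cast hK
    have h3 : (2:ℤ) ≤ t := by exact_mod_cast ht
    nlinarith
  have h1 := faulhaber_bound (p := p) m K (1 - 2 * K) hb hE1 (by positivity)
  have hTS := congrArg (fun x : ℕ => (x : ℚ_[p])) (T_eq hp.out m K hK)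
  push_cast at hTS
  have hT : (T p m (p ^ K) : ℚ_[p]) = (S m (p ^ K) : ℚ_[p])
      - (p : ℚ_[p]) ^ m * (S m (p ^ (K - 1)) : ℚ_[p]) := by linear_combination -hTS
  rcases eq_or_lt_of_le hK with hK1 | hK2
  · -- K = 1
    have hK1' : K = 1 := hK1.symm
    subst hK1'
    have hS0 : (S m (p ^ (1 - 1)) : ℚ_[p]) = 0 := by
      unfold S
      norm_num [Finset.sum_range_one]
      exact fun h => absurd h (by omega)
    rw [hS0, mul_zero, sub_zero] at hT
    have hid : (T p m (p ^ 1) : ℚ_[p]) -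
        (1 - (p : ℚ_[p]) ^ (m - 1)) * ((bernoulli m : ℚ) : ℚ_[p]) * (p : ℚ_[p]) ^ 1
        = ((S m (p ^ 1) : ℚ_[p]) - ((bernoulli m : ℚ) : ℚ_[p]) * (p : ℚ_[p]) ^ 1)
          + ((bernoulli m : ℚ) : ℚ_[p]) * (p : ℚ_[p]) ^ m := by
      rw [hT]
      have hpow : (p : ℚ_[p]) ^ (m - 1) * (p : ℚ_[p]) ^ 1 = (p : ℚ_[p]) ^ m := by
        rw [← pow_add]; congr 1; omega
      linear_combination ((bernoulli m : ℚ) : ℚ_[p]) * hpow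
    rw [hid]
    refine le_trans (Padic.nonarchimedean _ _) (max_le h1 ?_)
    rw [norm_mul, Padic.norm_p_pow]
    calc ‖((bernoulli m : ℚ) : ℚ_[p])‖ * (p:ℝ) ^ (-(m:ℤ))
        ≤ (p:ℝ) ^ (1:ℤ) * (p:ℝ) ^ (-(m:ℤ)) := by
          apply mul_le_mul_of_nonneg_right _ (by positivity)
          rw [zpow_one]; exact hBm
      _ = (p:ℝ) ^ ((1:ℤ) - m) := by rw [← zpow_add₀ (ne_of_gt hp0)]; ring_nf
      _ ≤ (p:ℝ) ^ (1 - 2 * (1:ℤ)) := by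
          apply zpow_le_zpow_right₀ hp1
          have : (2:ℤ) ≤ m := by exact_mod_cast hm
          omega
  · -- K ≥ 2
    have hK1 : 1 ≤ K - 1 := by omega
    have hE2 : ∀ t : ℕ, 2 ≤ t → t ≤ m + 1 →
        (1 : ℤ) + padicValNat p t - (K - 1 : ℕ) * t ≤ 1 - 2 * (K - 1 : ℕ) := by
      intro t ht _
      have h1 := val_le_sub_two (p := p) hp5 ht
      have h2 : (1:ℤ) ≤ ((K - 1 : ℕ):ℤ) := by exact_mod_cast hK1
      have h3 : (2:ℤ) ≤ t := by exact_mod_cast ht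
      nlinarith
    have h2 := faulhaber_bound (p := p) m (K - 1) (1 - 2 * (K - 1 : ℕ)) hb hE2 (by positivity)
    have hid : (T p m (p ^ K) : ℚ_[p]) -
        (1 - (p : ℚ_[p]) ^ (m - 1)) * ((bernoulli m : ℚ) : ℚ_[p]) * (p : ℚ_[p]) ^ K
        = ((S m (p ^ K) : ℚ_[p]) - ((bernoulli m : ℚ) : ℚ_[p]) * (p : ℚ_[p]) ^ K)
          - (p : ℚ_[p]) ^ m *
            ((S m (p ^ (K - 1)) : ℚ_[p]) - ((bernoulli m : ℚ) : ℚ_[p]) * (p : ℚ_[p]) ^ (K - 1)) := by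
      rw [hT]
      have hpow : (p : ℚ_[p]) ^ m * (p : ℚ_[p]) ^ (K - 1)
          = (p : ℚ_[p]) ^ (m - 1) * (p : ℚ_[p]) ^ K := by
        rw [← pow_add, ← pow_add]; congr 1; omega
      linear_combination -((bernoulli m : ℚ) : ℚ_[p]) * hpow
    rw [hid]
    refine le_trans (hnonarch _ _) (max_le h1 ?_)
    rw [norm_mul, Padic.norm_p_pow]
    calc (p:ℝ) ^ (-(m:ℤ)) * ‖(S m (p ^ (K - 1)) : ℚ_[p]) -
          ((bernoulli m : ℚ) : ℚ_[p]) * (p : ℚ_[p]) ^ (K - 1)‖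
        ≤ (p:ℝ) ^ (-(m:ℤ)) * (p:ℝ) ^ (1 - 2 * ((K - 1 : ℕ):ℤ)) :=
          mul_le_mul_of_nonneg_left h2 (by positivity)
      _ = (p:ℝ) ^ (-(m:ℤ) + (1 - 2 * ((K - 1 : ℕ):ℤ))) := by rw [← zpow_add₀ (ne_of_gt hp0)]
      _ ≤ (p:ℝ) ^ (1 - 2 * (K:ℤ)) := by
          apply zpow_le_zpow_right₀ hp1
          have h3 : (2:ℤ) ≤ m := by exact_mod_cast hm
          have h4 : ((K - 1 : ℕ):ℤ) = (K:ℤ) - 1 := by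
            have : 1 ≤ K := hK
            omega
          omega

end padic2

/-- The permutation property of multiplication by a unit. -/
lemma perm_sum (hp : p.Prime) {c K : ℕ} (hc : ¬ p ∣ c) (hK : 1 ≤ K) (e : ℕ) :
    ∑ a ∈ F p (p ^ K), ((c * a) % (p ^ K)) ^ e = ∑ a ∈ F p (p ^ K), a ^ e := by
  set N := p ^ K with hNdef
  have hN : p ∣ N := dvd_pow_self p (by omega)
  have hN1 : 1 < N := by
    calc 1 < p := hp.one_lt
      _ = p ^ 1 := (pow_one p).symm
      _ ≤ p ^ K := Nat.pow_le_pow_right hp.pos hK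
  have hN0 : 0 < N := by omega
  have hN1' : (1:ℕ) % N = 1 := Nat.one_mod_eq_one.mpr (by omega)
  have hcp : Nat.Coprime c p := Nat.coprime_comm.mp (hp.coprime_iff_not_dvd.mpr hc)
  have hcop : Nat.Coprime c N := Nat.Coprime.pow_right K hcp
  obtain ⟨c', -, hc'⟩ := Nat.exists_mul_mod_eq_one_of_coprime hcop hN1
  have hcc' : c * c' ≡ 1 [MOD N] := by unfold Nat.ModEq; rw [hc', hN1']
  have hc'p : ¬ p ∣ c' := by
    intro h
    have h1 : p ∣ c * c' := Dvd.dvd.mul_left h c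
    have h2 : p ∣ (c * c') % N := (Nat.dvd_mod_iff hN).mpr h1
    rw [hc'] at h2
    exact hp.one_lt.ne' (Nat.eq_one_of_dvd_one h2)
  have hdvd_mod : ∀ (d a : ℕ), ¬ p ∣ d → ¬ p ∣ a → ¬ p ∣ (d * a) % N := by
    intro d a hd ha hdvd
    have h1 : p ∣ d * a := (Nat.dvd_mod_iff hN).mp hdvd
    rcases (Nat.Prime.dvd_mul hp).mp h1 with h | h
    · exact hd h
    · exact ha h
  have hinv : ∀ (d d' a : ℕ), d * d' ≡ 1 [MOD N] → a < N → (d' * ((d * a) % N)) % N = a := by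
    intro d d' a hdd' haN
    have h1 : d' * ((d * a) % N) ≡ a [MOD N] := by
      calc d' * ((d * a) % N) ≡ d' * (d * a) [MOD N] := Nat.ModEq.mul_left _ (Nat.mod_modEq _ _)
        _ = (d * d') * a := by ring
        _ ≡ 1 * a [MOD N] := Nat.ModEq.mul_right _ hdd'
        _ = a := one_mul a
    have h2 : d' * ((d * a) % N) % N = a % N := h1
    rwa [Nat.mod_eq_of_lt haN] at h2
  have hc'c : c' * c ≡ 1 [MOD N] := by rwa [mul_comm] at hcc'
  refine Finset.sum_nbij' (fun a => (c * a) % N) (fun b => (c' * b) % N) ?_ ?_ ?_ ?_ ?_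
  · intro a ha
    simp only [F, Finset.mem_filter, Finset.mem_range] at ha ⊢
    exact ⟨Nat.mod_lt _ hN0, hdvd_mod c a hc ha.2⟩
  · intro b hb
    simp only [F, Finset.mem_filter, Finset.mem_range] at hb ⊢
    exact ⟨Nat.mod_lt _ hN0, hdvd_mod c' b hc'p hb.2⟩
  · intro a ha
    simp only [F, Finset.mem_filter, Finset.mem_range] at ha
    exact hinv c c' a hcc' ha.1
  · intro b hb
    simp only [F, Finset.mem_filter, Finset.mem_range] at hb
    exact hinv c' c b hc'c hb.1
  · intro a _
    rfl

/-- The star identity. -/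
lemma star (hp : p.Prime) {c : ℕ} (m K : ℕ) (hc : ¬ p ∣ c) (hm : 2 ≤ m) (hK : 1 ≤ K)
    (hp1 : 1 < p) :
    ((p : ℤ) ^ (2 * K)) ∣
      ((c : ℤ) ^ m - 1) * (T p m (p ^ K)) - m * (p : ℤ) ^ K * (U p c m (p ^ K)) := by
  obtain ⟨m', rfl⟩ : ∃ m', m = m' + 2 := ⟨m - 2, by omega⟩
  set N := p ^ K with hNdef
  set Fs := F p N with hFdef
  have hNcast : ((N : ℕ) : ℤ) = (p : ℤ) ^ K := by rw [hNdef]; push_cast; ring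
  have hperm := perm_sum (c := c) (K := K) hp hc hK (m' + 2)
  rw [← hNdef] at hperm
  have hTcast : (T p (m' + 2) N : ℤ) = ∑ a ∈ Fs, (a : ℤ) ^ (m' + 2) := by
    unfold T; push_cast; rfl
  have hRcast : (T p (m' + 2) N : ℤ) = ∑ a ∈ Fs, (((c * a) % N : ℕ) : ℤ) ^ (m' + 2) := by
    have hZ := congrArg (Nat.cast : ℕ → ℤ) hperm
    rw [Nat.cast_sum, Nat.cast_sum] at hZ
    simp only [Nat.cast_pow] at hZ
    exact hTcast.trans hZ.symm
  have hUcast : (U p c (m' + 2) N : ℤ)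
      = ∑ a ∈ Fs, (((c * a) % N : ℕ) : ℤ) ^ (m' + 1) * (((c * a) / N : ℕ) : ℤ) := by
    unfold U; push_cast; rfl
  have hsum : ((c : ℤ) ^ (m' + 2) - 1) * (T p (m' + 2) N)
        - ((m' + 2 : ℕ) : ℤ) * (p : ℤ) ^ K * (U p c (m' + 2) N)
      = ∑ a ∈ Fs,
          (((c : ℤ) * a) ^ (m' + 2) - (((c * a) % N : ℕ) : ℤ) ^ (m' + 2)
            - ((m' + 2 : ℕ) : ℤ) * (((c * a) % N : ℕ) : ℤ) ^ (m' + 1) *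
              ((p : ℤ) ^ K * (((c * a) / N : ℕ) : ℤ))) := by
    rw [Finset.sum_sub_distrib, Finset.sum_sub_distrib]
    have e1 : ∑ a ∈ Fs, ((c : ℤ) * a) ^ (m' + 2) = (c:ℤ) ^ (m' + 2) * (T p (m' + 2) N) := by
      rw [hTcast, Finset.mul_sum]
      exact Finset.sum_congr rfl fun a _ => by rw [mul_pow]
    have e2 : ∑ a ∈ Fs, ((m' + 2 : ℕ) : ℤ) * (((c * a) % N : ℕ) : ℤ) ^ (m' + 1) *
          ((p : ℤ) ^ K * (((c * a) / N : ℕ) : ℤ))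
        = ((m' + 2 : ℕ) : ℤ) * (p : ℤ) ^ K * (U p c (m' + 2) N) := by
      rw [hUcast, Finset.mul_sum]
      exact Finset.sum_congr rfl fun a _ => by ring
    rw [e1, e2, ← hRcast]
    push_cast
    ring
  rw [hsum]
  apply Finset.dvd_sum
  intro a _
  have hxy : (((c * a) % N : ℕ) : ℤ) + (p : ℤ) ^ K * (((c * a) / N : ℕ) : ℤ)
      = (c : ℤ) * a := by
    have h := Nat.div_add_mod (c * a) N
    have h2 : ((N : ℕ) : ℤ) * (((c * a) / N : ℕ) : ℤ) + (((c * a) % N : ℕ) : ℤ)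
        = ((c * a : ℕ) : ℤ) := by exact_mod_cast congrArg (Nat.cast : ℕ → ℤ) h
    rw [hNcast] at h2
    have h3 : ((c * a : ℕ) : ℤ) = (c : ℤ) * a := by push_cast; ring
    linear_combination h2 + h3
  have hdvd := sq_dvd_aux (((c * a) % N : ℕ) : ℤ) ((p : ℤ) ^ K * (((c * a) / N : ℕ) : ℤ)) (m' + 1)
  rw [hxy] at hdvd
  have h2K : ((p : ℤ) ^ (2 * K)) ∣ ((p : ℤ) ^ K * (((c * a) / N : ℕ) : ℤ)) ^ 2 :=
    ⟨(((c * a) / N : ℕ) : ℤ) ^ 2, by rw [two_mul, pow_add]; ring⟩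
  have hfin := dvd_trans h2K hdvd
  have heq : ((c : ℤ) * a) ^ (m' + 1 + 1) - (((c * a) % N : ℕ) : ℤ) ^ (m' + 1 + 1)
        - ((m' + 1 + 1 : ℕ) : ℤ) * (((c * a) % N : ℕ) : ℤ) ^ (m' + 1) *
          ((p : ℤ) ^ K * (((c * a) / N : ℕ) : ℤ))
      = ((c : ℤ) * a) ^ (m' + 2) - (((c * a) % N : ℕ) : ℤ) ^ (m' + 2)
        - ((m' + 2 : ℕ) : ℤ) * (((c * a) % N : ℕ) : ℤ) ^ (m' + 1) *
          ((p : ℤ) ^ K * (((c * a) / N : ℕ) : ℤ)) := by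
    push_cast
    ring
  rw [heq] at hfin
  exact hfin

/-- Euler's theorem consequence. -/
lemma euler_pow (k a m n : ℕ) (hp : p.Prime) (ha : ¬ p ∣ a)
    (hmn : m ≡ n [MOD (p ^ k).totient]) : a ^ m ≡ a ^ n [MOD p ^ k] := by
  have hcop : a.Coprime (p ^ k) :=
    Nat.Coprime.pow_right k (Nat.coprime_comm.mp (hp.coprime_iff_not_dvd.mpr ha))
  have key : ∀ m n : ℕ, m ≤ n → m ≡ n [MOD (p ^ k).totient] → a ^ m ≡ a ^ n [MOD p ^ k] := by
    intro m n hle h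
    obtain ⟨t, ht⟩ := (Nat.modEq_iff_dvd' hle).mp h
    have hn : n = m + (p ^ k).totient * t := by omega
    subst hn
    rw [pow_add, pow_mul]
    conv_lhs => rw [← mul_one (a ^ m)]
    refine Nat.ModEq.mul_left _ ?_
    calc (1:ℕ) = 1 ^ t := (one_pow t).symm
      _ ≡ (a ^ (p ^ k).totient) ^ t [MOD p ^ k] :=
        Nat.ModEq.pow t (Nat.ModEq.pow_totient hcop).symm
  rcases le_total m n with h | h
  · exact key m n h hmn
  · exact (key n m h hmn.symm).symm

lemma sum_modEq {s : Finset ℕ} {f g : ℕ → ℕ} {M : ℕ}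
    (h : ∀ a ∈ s, f a ≡ g a [MOD M]) : (∑ a ∈ s, f a) ≡ (∑ a ∈ s, g a) [MOD M] := by
  unfold Nat.ModEq
  rw [Finset.sum_nat_mod s M f, Finset.sum_nat_mod s M g,
    Finset.sum_congr rfl fun a ha => h a ha]

/-- The key congruence between twisted sums. -/
lemma U_congr (hp : p.Prime) {c : ℕ} (k m n K : ℕ) (hc : ¬ p ∣ c) (hm : 1 ≤ m) (hn : 1 ≤ n)
    (hK : 1 ≤ K) (hmn : m ≡ n [MOD (p ^ k).totient]) :
    ((p : ℤ) ^ k) ∣ ((c : ℤ) ^ n - 1) * (U p c m (p ^ K)) -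
      ((c : ℤ) ^ m - 1) * (U p c n (p ^ K)) := by
  set N := p ^ K with hNdef
  have hNp : p ∣ N := dvd_pow_self p (by omega)
  have hcm : c ^ m ≡ c ^ n [MOD p ^ k] := euler_pow k c m n hp hc hmn
  have hmn1 : m - 1 ≡ n - 1 [MOD (p ^ k).totient] := by
    apply Nat.ModEq.add_right_cancel' 1
    have h1 : m - 1 + 1 = m := by omega
    have h2 : n - 1 + 1 = n := by omega
    rw [h1, h2]
    exact hmn
  have hU : U p c m N ≡ U p c n N [MOD p ^ k] := by
    unfold U
    apply sum_modEq
    intro a ha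
    simp only [F, Finset.mem_filter, Finset.mem_range] at ha
    have hr : ¬ p ∣ (c * a) % N := by
      intro hdvd
      have h1 : p ∣ c * a := (Nat.dvd_mod_iff hNp).mp hdvd
      rcases (Nat.Prime.dvd_mul hp).mp h1 with h | h
      · exact hc h
      · exact ha.2 h
    exact Nat.ModEq.mul_right _ (euler_pow k _ (m-1) (n-1) hp hr hmn1)
  have hcmZ : ((c : ℤ)) ^ m ≡ (c : ℤ) ^ n [ZMOD ((p : ℤ) ^ k)] := by
    have := Int.natCast_modEq_iff.mpr hcm
    push_cast at this
    exact_mod_cast this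
  have hUZ : ((U p c m N : ℕ) : ℤ) ≡ ((U p c n N : ℕ) : ℤ) [ZMOD ((p : ℤ) ^ k)] := by
    have := Int.natCast_modEq_iff.mpr hU
    push_cast at this
    exact_mod_cast this
  have hmul : ((c : ℤ) ^ n - 1) * (U p c m N : ℤ) ≡ ((c : ℤ) ^ m - 1) * (U p c n N : ℤ)
      [ZMOD ((p : ℤ) ^ k)] := Int.ModEq.mul (Int.ModEq.sub hcmZ.symm (Int.ModEq.refl 1)) hUZ
  exact Int.ModEq.dvd hmul.symm

/-- Existence of a primitive root giving unit factors. -/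
lemma exists_unit (hp : p.Prime) (m n : ℕ) (hmd : ¬ (p - 1) ∣ m) (hnd : ¬ (p - 1) ∣ n) :
    ∃ c : ℕ, ¬ p ∣ c ∧ ¬ (p : ℤ) ∣ ((c : ℤ) ^ m - 1) ∧ ¬ (p : ℤ) ∣ ((c : ℤ) ^ n - 1) := by
  haveI : Fact p.Prime := ⟨hp⟩
  obtain ⟨g, hg⟩ := IsCyclic.exists_generator (α := (ZMod p)ˣ)
  have horder : orderOf g = p - 1 := by
    have hcard : Fintype.card (ZMod p)ˣ = p - 1 := by
      rw [ZMod.card_units_eq_totient, Nat.totient_prime hp]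
    rw [orderOf_eq_card_of_forall_mem_zpowers hg]
    simp [Nat.card_eq_fintype_card, hcard]
  refine ⟨((g : ZMod p)).val, ?_, ?_, ?_⟩
  · intro h
    have h0 : (((((g : ZMod p)).val : ℕ)) : ZMod p) = 0 := (ZMod.natCast_eq_zero_iff _ _).mpr h
    rw [ZMod.natCast_zmod_val] at h0
    exact g.ne_zero h0
  · intro h
    have h0 : ((((((g : ZMod p)).val : ℕ) : ℤ) ^ m - 1 : ℤ) : ZMod p) = 0 := by
      rw [ZMod.intCast_zmod_eq_zero_iff_dvd]
      exact_mod_cast h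
    push_cast at h0
    rw [ZMod.natCast_zmod_val] at h0
    have hg1 : g ^ m = 1 := by
      ext
      push_cast
      linear_combination h0
    exact hmd (horder ▸ orderOf_dvd_of_pow_eq_one hg1)
  · intro h
    have h0 : ((((((g : ZMod p)).val : ℕ) : ℤ) ^ n - 1 : ℤ) : ZMod p) = 0 := by
      rw [ZMod.intCast_zmod_eq_zero_iff_dvd]
      exact_mod_cast h
    push_cast at h0
    rw [ZMod.natCast_zmod_val] at h0
    have hg1 : g ^ n = 1 := by
      ext
      push_cast
      linear_combination h0
    exact hnd (horder ▸ orderOf_dvd_of_pow_eq_one hg1)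

end KummerAux

/-- **Kummer's congruence.** For a prime `p`, an integer `k ≥ 1`, and positive even
integers `m`, `n` not divisible by `p - 1` with `m ≡ n (mod φ(p^k))`, one has
`(1 - p^(m-1)) * B m / m ≡ (1 - p^(n-1)) * B n / n (mod p^k)`, i.e. the `p`-adic
valuation of the difference is at least `k`. -/
theorem kummer_congruence (p : ℕ) (hp : p.Prime) (k : ℕ) (hk : 1 ≤ k)
    (m n : ℕ) (hm : 0 < m) (hn : 0 < n) (hme : Even m) (hne : Even n)
    (hmd : ¬ (p - 1) ∣ m) (hnd : ¬ (p - 1) ∣ n)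
    (hmn : m ≡ n [MOD Nat.totient (p ^ k)]) :
    (1 - (p : ℚ) ^ (m - 1)) * bernoulli m / m
        - (1 - (p : ℚ) ^ (n - 1)) * bernoulli n / n = 0 ∨
      (k : ℤ) ≤ padicValRat p
        ((1 - (p : ℚ) ^ (m - 1)) * bernoulli m / m
          - (1 - (p : ℚ) ^ (n - 1)) * bernoulli n / n) := by
  classical
  haveI hfact : Fact p.Prime := ⟨hp⟩
  have hp5 : 5 ≤ p := by
    have h2 := hp.two_le
    by_contra h
    push_neg at h
    interval_cases p
    · exact hmd (by norm_num)
    · exact hmd (by simpa using hme.two_dvd)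
    · norm_num at hp
  have hp0R : (0:ℝ) < p := by exact_mod_cast hp.pos
  have hp1R : (1:ℝ) < p := by exact_mod_cast hp.one_lt
  have hm2 : 2 ≤ m := by
    have := Nat.even_iff.mp hme
    omega
  have hn2 : 2 ≤ n := by
    have := Nat.even_iff.mp hne
    omega
  obtain ⟨c, hc, hcm, hcn⟩ := KummerAux.exists_unit hp m n hmd hnd
  set vm := padicValNat p m with hvm
  set vn := padicValNat p n with hvn
  set K := k + vm + vn + 1 with hKdef
  have hK : 1 ≤ K := by omega
  set D : ℚ := (1 - (p : ℚ) ^ (m - 1)) * bernoulli m / m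
      - (1 - (p : ℚ) ^ (n - 1)) * bernoulli n / n with hD
  by_cases hD0 : D = 0
  · left; exact hD0
  right
  suffices hnorm : ‖((D : ℚ) : ℚ_[p])‖ ≤ (p:ℝ) ^ (-(k:ℤ)) by
    rw [Padic.eq_padicNorm, padicNorm.eq_zpow_of_nonzero hD0] at hnorm
    have hcast : (((p:ℚ) ^ (-padicValRat p D) : ℚ) : ℝ) = (p:ℝ) ^ (-padicValRat p D) := by
      push_cast
      rfl
    rw [hcast] at hnorm
    have hle := (zpow_le_zpow_iff_right₀ hp1R).mp hnorm
    omega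
  -- notation
  set P : ℚ_[p] := (p : ℚ_[p]) with hP
  set Bm : ℚ_[p] := ((bernoulli m : ℚ) : ℚ_[p]) with hBm
  set Bn : ℚ_[p] := ((bernoulli n : ℚ) : ℚ_[p]) with hBn
  set Mq : ℚ_[p] := (m : ℚ_[p]) with hMq
  set Nq : ℚ_[p] := (n : ℚ_[p]) with hNq
  set Cm : ℚ_[p] := (c : ℚ_[p]) ^ m - 1 with hCm
  set Cn : ℚ_[p] := (c : ℚ_[p]) ^ n - 1 with hCn
  set tm : ℚ_[p] := (KummerAux.T p m (p ^ K) : ℚ_[p]) with htm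
  set tn : ℚ_[p] := (KummerAux.T p n (p ^ K) : ℚ_[p]) with htn
  set um : ℚ_[p] := (KummerAux.U p c m (p ^ K) : ℚ_[p]) with hum
  set un : ℚ_[p] := (KummerAux.U p c n (p ^ K) : ℚ_[p]) with hun
  set Em : ℚ_[p] := tm - (1 - P ^ (m - 1)) * Bm * P ^ K with hEm
  set En : ℚ_[p] := tn - (1 - P ^ (n - 1)) * Bn * P ^ K with hEn
  set Rm : ℚ_[p] := Cm * tm - Mq * P ^ K * um with hRm
  set Rn : ℚ_[p] := Cn * tn - Nq * P ^ K * un with hRn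
  set W : ℚ_[p] := Cn * um - Cm * un with hW
  have hnonarch : ∀ x y : ℚ_[p], ‖x - y‖ ≤ max ‖x‖ ‖y‖ := by
    intro x y
    rw [sub_eq_add_neg]
    simpa [norm_neg] using Padic.nonarchimedean x (-y)
  -- norm facts
  have hEmb : ‖Em‖ ≤ (p:ℝ) ^ (1 - 2 * (K:ℤ)) := KummerAux.T_bound hp5 m K hm2 hK
  have hEnb : ‖En‖ ≤ (p:ℝ) ^ (1 - 2 * (K:ℤ)) := KummerAux.T_bound hp5 n K hn2 hK
  have hRmb : ‖Rm‖ ≤ (p:ℝ) ^ (-(2 * K : ℕ) : ℤ) := by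
    have hdvd := KummerAux.star hp m K hc hm2 hK hp.one_lt
    have hnorm := (Padic.norm_int_le_pow_iff_dvd
      (((c : ℤ) ^ m - 1) * (KummerAux.T p m (p ^ K)) -
        m * (p : ℤ) ^ K * (KummerAux.U p c m (p ^ K))) (2 * K)).mpr hdvd
    have hcast : ((((c : ℤ) ^ m - 1) * (KummerAux.T p m (p ^ K)) -
        m * (p : ℤ) ^ K * (KummerAux.U p c m (p ^ K)) : ℤ) : ℚ_[p]) = Rm := by
      rw [hRm, hCm, htm, hMq, hum, hP]
      push_cast
      ring
    rwa [hcast] at hnorm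
  have hRnb : ‖Rn‖ ≤ (p:ℝ) ^ (-(2 * K : ℕ) : ℤ) := by
    have hdvd := KummerAux.star hp n K hc hn2 hK hp.one_lt
    have hnorm := (Padic.norm_int_le_pow_iff_dvd
      (((c : ℤ) ^ n - 1) * (KummerAux.T p n (p ^ K)) -
        n * (p : ℤ) ^ K * (KummerAux.U p c n (p ^ K))) (2 * K)).mpr hdvd
    have hcast : ((((c : ℤ) ^ n - 1) * (KummerAux.T p n (p ^ K)) -
        n * (p : ℤ) ^ K * (KummerAux.U p c n (p ^ K)) : ℤ) : ℚ_[p]) = Rn := by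
      rw [hRn, hCn, htn, hNq, hun, hP]
      push_cast
      ring
    rwa [hcast] at hnorm
  have hWb : ‖W‖ ≤ (p:ℝ) ^ (-(k:ℤ)) := by
    have hdvd := KummerAux.U_congr hp k m n K hc (by omega) (by omega) hK hmn
    have hnorm := (Padic.norm_int_le_pow_iff_dvd
      (((c : ℤ) ^ n - 1) * (KummerAux.U p c m (p ^ K)) -
        ((c : ℤ) ^ m - 1) * (KummerAux.U p c n (p ^ K))) k).mpr hdvd
    have hcast : ((((c : ℤ) ^ n - 1) * (KummerAux.U p c m (p ^ K)) -
        ((c : ℤ) ^ m - 1) * (KummerAux.U p c n (p ^ K)) : ℤ) : ℚ_[p]) = W := by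
      rw [hW, hCm, hCn, hum, hun]
      push_cast
      ring
    rwa [hcast] at hnorm
  have hMnorm : ‖Mq‖ = (p:ℝ) ^ (-(vm:ℤ)) := by
    rw [hMq, hvm]
    exact KummerAux.norm_natCast_eq (by omega)
  have hNnorm : ‖Nq‖ = (p:ℝ) ^ (-(vn:ℤ)) := by
    rw [hNq, hvn]
    exact KummerAux.norm_natCast_eq (by omega)
  have hCmnorm : ‖Cm‖ = 1 := by
    have := KummerAux.norm_intCast_eq_one (p := p) hcm
    rw [hCm]
    push_cast at this
    exact this
  have hCnnorm : ‖Cn‖ = 1 := by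
    have := KummerAux.norm_intCast_eq_one (p := p) hcn
    rw [hCn]
    push_cast at this
    exact this
  have hMne : Mq ≠ 0 := by
    rw [hMq]
    exact_mod_cast (Nat.cast_ne_zero (R := ℚ_[p])).mpr (by omega)
  have hNne : Nq ≠ 0 := by
    rw [hNq]
    exact_mod_cast (Nat.cast_ne_zero (R := ℚ_[p])).mpr (by omega)
  have hDcast : ((D : ℚ) : ℚ_[p]) = (1 - P ^ (m - 1)) * Bm / Mq - (1 - P ^ (n - 1)) * Bn / Nq := by
    rw [hD, hP, hBm, hBn, hMq, hNq]
    push_cast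
    ring
  -- the key algebraic identity
  have hid : Mq * Nq * Cm * Cn * P ^ K * ((D : ℚ) : ℚ_[p])
      = Mq * Nq * P ^ K * W + (Nq * Cn * Rm - Mq * Cm * Rn) - Cm * Cn * (Nq * Em - Mq * En) := by
    rw [hDcast, hW, hRm, hRn, hEm, hEn]
    field_simp
    ring
  -- norm bound on the right side
  set E : ℤ := -(K:ℤ) - vm - vn - k with hEdef
  have hb1 : ‖Mq * Nq * P ^ K * W‖ ≤ (p:ℝ) ^ E := by
    rw [norm_mul, norm_mul, norm_mul, hMnorm, hNnorm, hP, Padic.norm_p_pow]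
    calc (p:ℝ) ^ (-(vm:ℤ)) * (p:ℝ) ^ (-(vn:ℤ)) * (p:ℝ) ^ (-(K:ℤ)) * ‖W‖
        ≤ (p:ℝ) ^ (-(vm:ℤ)) * (p:ℝ) ^ (-(vn:ℤ)) * (p:ℝ) ^ (-(K:ℤ)) * ((p:ℝ) ^ (-(k:ℤ))) := by
          apply mul_le_mul_of_nonneg_left hWb (by positivity)
      _ = (p:ℝ) ^ (-(vm:ℤ) + -(vn:ℤ) + -(K:ℤ) + -(k:ℤ)) := by
          rw [← zpow_add₀ (ne_of_gt hp0R), ← zpow_add₀ (ne_of_gt hp0R),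
            ← zpow_add₀ (ne_of_gt hp0R)]
      _ ≤ (p:ℝ) ^ E := by
          apply zpow_le_zpow_right₀ (le_of_lt hp1R)
          omega
  have hb2 : ‖Nq * Cn * Rm - Mq * Cm * Rn‖ ≤ (p:ℝ) ^ E := by
    refine le_trans (hnonarch _ _) (max_le ?_ ?_)
    · rw [norm_mul, norm_mul, hNnorm, hCnnorm, mul_one]
      calc (p:ℝ) ^ (-(vn:ℤ)) * ‖Rm‖ ≤ (p:ℝ) ^ (-(vn:ℤ)) * ((p:ℝ) ^ (-(2 * K : ℕ) : ℤ)) :=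
            mul_le_mul_of_nonneg_left hRmb (by positivity)
        _ = (p:ℝ) ^ (-(vn:ℤ) + (-(2 * K : ℕ) : ℤ)) := by rw [← zpow_add₀ (ne_of_gt hp0R)]
        _ ≤ (p:ℝ) ^ E := by
            apply zpow_le_zpow_right₀ (le_of_lt hp1R)
            push_cast
            omega
    · rw [norm_mul, norm_mul, hMnorm, hCmnorm, mul_one]
      calc (p:ℝ) ^ (-(vm:ℤ)) * ‖Rn‖ ≤ (p:ℝ) ^ (-(vm:ℤ)) * ((p:ℝ) ^ (-(2 * K : ℕ) : ℤ)) :=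
            mul_le_mul_of_nonneg_left hRnb (by positivity)
        _ = (p:ℝ) ^ (-(vm:ℤ) + (-(2 * K : ℕ) : ℤ)) := by rw [← zpow_add₀ (ne_of_gt hp0R)]
        _ ≤ (p:ℝ) ^ E := by
            apply zpow_le_zpow_right₀ (le_of_lt hp1R)
            push_cast
            omega
  have hb3 : ‖Cm * Cn * (Nq * Em - Mq * En)‖ ≤ (p:ℝ) ^ E := by
    rw [norm_mul, norm_mul, hCmnorm, hCnnorm, one_mul, one_mul]
    refine le_trans (hnonarch _ _) (max_le ?_ ?_)
    · rw [norm_mul, hNnorm]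
      calc (p:ℝ) ^ (-(vn:ℤ)) * ‖Em‖ ≤ (p:ℝ) ^ (-(vn:ℤ)) * ((p:ℝ) ^ (1 - 2 * (K:ℤ))) :=
            mul_le_mul_of_nonneg_left hEmb (by positivity)
        _ = (p:ℝ) ^ (-(vn:ℤ) + (1 - 2 * (K:ℤ))) := by rw [← zpow_add₀ (ne_of_gt hp0R)]
        _ ≤ (p:ℝ) ^ E := by
            apply zpow_le_zpow_right₀ (le_of_lt hp1R)
            omega
    · rw [norm_mul, hMnorm]
      calc (p:ℝ) ^ (-(vm:ℤ)) * ‖En‖ ≤ (p:ℝ) ^ (-(vm:ℤ)) * ((p:ℝ) ^ (1 - 2 * (K:ℤ))) :=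
            mul_le_mul_of_nonneg_left hEnb (by positivity)
        _ = (p:ℝ) ^ (-(vm:ℤ) + (1 - 2 * (K:ℤ))) := by rw [← zpow_add₀ (ne_of_gt hp0R)]
        _ ≤ (p:ℝ) ^ E := by
            apply zpow_le_zpow_right₀ (le_of_lt hp1R)
            omega
  have hRHS : ‖Mq * Nq * Cm * Cn * P ^ K * ((D : ℚ) : ℚ_[p])‖ ≤ (p:ℝ) ^ E := by
    rw [hid]
    exact le_trans (hnonarch _ _)
      (max_le (le_trans (Padic.nonarchimedean _ _) (max_le hb1 hb2)) hb3)
  have hLHS : ‖Mq * Nq * Cm * Cn * P ^ K * ((D : ℚ) : ℚ_[p])‖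
      = (p:ℝ) ^ (-(vm:ℤ)) * (p:ℝ) ^ (-(vn:ℤ)) * (p:ℝ) ^ (-(K:ℤ)) * ‖((D : ℚ) : ℚ_[p])‖ := by
    rw [norm_mul, norm_mul, norm_mul, norm_mul, norm_mul, hMnorm, hNnorm, hCmnorm, hCnnorm, hP,
      Padic.norm_p_pow]
    ring
  rw [hLHS] at hRHS
  have hXpos : (0:ℝ) < (p:ℝ) ^ (-(vm:ℤ)) * (p:ℝ) ^ (-(vn:ℤ)) * (p:ℝ) ^ (-(K:ℤ)) := by positivity
  have hsplit : (p:ℝ) ^ (E + (vm:ℤ) + (vn:ℤ) + (K:ℤ))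
      = ((p:ℝ) ^ E) / ((p:ℝ) ^ (-(vm:ℤ)) * (p:ℝ) ^ (-(vn:ℤ)) * (p:ℝ) ^ (-(K:ℤ))) := by
    rw [eq_div_iff (ne_of_gt hXpos), ← zpow_add₀ (ne_of_gt hp0R), ← zpow_add₀ (ne_of_gt hp0R),
      ← zpow_add₀ (ne_of_gt hp0R)]
    congr 1
    ring
  have hfin : ‖((D : ℚ) : ℚ_[p])‖ ≤ (p:ℝ) ^ (E + (vm:ℤ) + (vn:ℤ) + (K:ℤ)) := by
    rw [hsplit, le_div_iff₀ hXpos]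
    calc ‖((D : ℚ) : ℚ_[p])‖ * ((p:ℝ) ^ (-(vm:ℤ)) * (p:ℝ) ^ (-(vn:ℤ)) * (p:ℝ) ^ (-(K:ℤ)))
        = (p:ℝ) ^ (-(vm:ℤ)) * (p:ℝ) ^ (-(vn:ℤ)) * (p:ℝ) ^ (-(K:ℤ)) * ‖((D : ℚ) : ℚ_[p])‖ := by
          ring
      _ ≤ (p:ℝ) ^ E := hRHS
  have hEk : E + (vm:ℤ) + (vn:ℤ) + (K:ℤ) = -(k:ℤ) := by
    rw [hEdef]
    have : (K:ℤ) = (k:ℤ) + vm + vn + 1 := by exact_mod_cast congrArg (Nat.cast : ℕ → ℤ) hKdef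
    omega
  rwa [hEk] at hfin
end

section
/- (von Staudt–Clausen.) For every even integer n ≥ 2, the rational number B_n + Σ_{p prime, (p−1) | n} 1/p is an integer. -/
open Finset

private def Dd (k n : ℕ) : ℤ := ∑ j ∈ range (k + 1), (-1) ^ j * (k.choose j) * (j : ℤ) ^ n

private def Ee (k n : ℕ) : ℤ := ∑ i ∈ range (k + 1), (-1) ^ i * (k.choose i) * ((i : ℤ) + 1) ^ n


private lemma Dd_zero_right (k : ℕ) : Dd k 0 = if k = 0 then 1 else 0 := by
  simpa [Dd] using Int.alternating_sum_range_choose (n := k)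

private lemma Dd_expand (k n : ℕ) :
    Dd (k + 1) n =
      (∑ i ∈ range (k + 1), (-1) ^ (i + 1) * ((k + 1).choose (i + 1) : ℤ) * ((i : ℤ) + 1) ^ n)
        + (0 : ℤ) ^ n := by
  rw [Dd, Finset.sum_range_succ']
  refine congrArg₂ (· + ·) (Finset.sum_congr rfl fun i _ => by push_cast; ring) (by simp)

private lemma Dd_succ (k n : ℕ) : Dd (k + 1) n = Dd k n - Ee k n := by
  rw [Dd_expand]
  have h1 : ∀ i ∈ range (k + 1),
      (-1 : ℤ) ^ (i + 1) * ((k + 1).choose (i + 1) : ℤ) * ((i : ℤ) + 1) ^ n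
      = (-1) ^ (i + 1) * (k.choose i : ℤ) * ((i : ℤ) + 1) ^ n
        + (-1) ^ (i + 1) * (k.choose (i + 1) : ℤ) * ((i : ℤ) + 1) ^ n := by
    intro i _
    rw [Nat.choose_succ_succ]
    push_cast
    ring
  rw [Finset.sum_congr rfl h1, Finset.sum_add_distrib]
  have h2 : ∑ i ∈ range (k + 1), (-1 : ℤ) ^ (i + 1) * (k.choose i : ℤ) * ((i : ℤ) + 1) ^ n
      = -Ee k n := by
    rw [Ee, ← Finset.sum_neg_distrib]
    refine Finset.sum_congr rfl fun i _ => by ring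
  have hs := Finset.sum_range_succ' (fun j => (-1 : ℤ) ^ j * (k.choose j : ℤ) * (j : ℤ) ^ n) (k + 1)
  have h4 : ∑ j ∈ range (k + 1 + 1), (-1 : ℤ) ^ j * (k.choose j : ℤ) * (j : ℤ) ^ n = Dd k n := by
    rw [Finset.sum_range_succ, Nat.choose_succ_self, Dd]
    push_cast
    ring
  rw [h4] at hs
  have h3 : ∑ i ∈ range (k + 1), (-1 : ℤ) ^ (i + 1) * (k.choose (i + 1) : ℤ) * ((i : ℤ) + 1) ^ n
      = Dd k n - (0 : ℤ) ^ n := by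
    rw [show Dd k n = _ from hs]
    simp only [pow_zero, Nat.choose_zero_right, Nat.cast_one, Nat.cast_zero, one_mul, mul_one]
    rw [add_sub_cancel_right]
    refine Finset.sum_congr rfl fun i _ => by push_cast; ring
  rw [h2, h3]
  ring

private lemma Dd_succ_succ (k n : ℕ) : Dd (k + 1) (n + 1) = -((k : ℤ) + 1) * Ee k n := by
  rw [Dd_expand]
  have h0 : (0 : ℤ) ^ (n + 1) = 0 := by simp
  rw [h0, add_zero, Ee, Finset.mul_sum]
  refine Finset.sum_congr rfl fun i _ => ?_
  have hc : ((k + 1).choose (i + 1) : ℤ) * ((i : ℤ) + 1) = ((k : ℤ) + 1) * (k.choose i : ℤ) := by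
    have := Nat.add_one_mul_choose_eq k i
    have h := congrArg (Nat.cast : ℕ → ℤ) this
    push_cast at h
    linarith
  have : ((i : ℤ) + 1) ^ (n + 1) = ((i : ℤ) + 1) * ((i : ℤ) + 1) ^ n := by ring
  rw [this]
  linear_combination ((-1 : ℤ) ^ (i + 1) * ((i : ℤ) + 1) ^ n) * hc

private lemma Dd_eq_zero {m k : ℕ} (h : m < k) : Dd k m = 0 := by
  induction m generalizing k with
  | zero =>
    rw [show Dd k 0 = if k = 0 then 1 else 0 from by
      simpa [Dd] using Int.alternating_sum_range_choose (n := k), if_neg (by omega)]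
  | succ m ih =>
    obtain ⟨k', rfl⟩ : ∃ k', k = k' + 1 := ⟨k - 1, by omega⟩
    rw [Dd_succ_succ, show Ee k' m = Dd k' m - Dd (k' + 1) m from by rw [Dd_succ]; ring,
      ih (by omega), ih (by omega)]
    ring

private lemma factorial_dvd_Dd (n k : ℕ) : (Nat.factorial k : ℤ) ∣ Dd k n := by
  induction n generalizing k with
  | zero => rw [Dd_zero_right]; split <;> simp [*]
  | succ n ih =>
    cases k with
    | zero => simp
    | succ k =>
      have hrec : Dd (k + 1) (n + 1) = ((k : ℤ) + 1) * (Dd (k + 1) n - Dd k n) := by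
        rw [Dd_succ_succ, show Ee k n = Dd k n - Dd (k + 1) n from by rw [Dd_succ]; ring]
        ring
      rw [hrec, show (Nat.factorial (k+1) : ℤ) = ((k : ℤ) + 1) * (Nat.factorial k : ℤ) from by
        push_cast [Nat.factorial_succ]; ring]
      refine mul_dvd_mul_left _ (dvd_sub ?_ (ih k))
      have hdv : (Nat.factorial k : ℤ) ∣ (Nat.factorial (k + 1) : ℤ) :=
        Int.natCast_dvd_natCast.mpr (Nat.factorial_dvd_factorial (Nat.le_succ k))
      exact dvd_trans hdv (ih (k + 1))

private lemma binom_sum (N : ℕ) (x : ℤ) :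
    ∑ m ∈ range N, (N.choose m : ℤ) * x ^ m = (x + 1) ^ N - x ^ N := by
  have h := add_pow x 1 N
  simp only [one_pow, mul_one] at h
  rw [Finset.sum_range_succ, Nat.choose_self] at h
  have : ∑ m ∈ range N, (N.choose m : ℤ) * x ^ m = ∑ m ∈ range N, x ^ m * (N.choose m : ℤ) := by
    exact Finset.sum_congr rfl fun m _ => by ring
  rw [this]
  push_cast at h ⊢
  linarith

private lemma innerSumD (N k : ℕ) :
    ∑ m ∈ range N, (N.choose m : ℤ) * Dd k m = -Dd (k + 1) N := by
  have h1 : ∑ m ∈ range N, (N.choose m : ℤ) * Dd k m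
      = ∑ j ∈ range (k + 1), (-1) ^ j * (k.choose j : ℤ) *
          (∑ m ∈ range N, (N.choose m : ℤ) * (j : ℤ) ^ m) := by
    simp only [Dd, Finset.mul_sum]
    rw [Finset.sum_comm]
    refine Finset.sum_congr rfl fun j _ => ?_
    exact Finset.sum_congr rfl fun m _ => by ring
  rw [h1]
  have h2 : ∀ j ∈ range (k + 1), (-1 : ℤ) ^ j * (k.choose j : ℤ) *
      (∑ m ∈ range N, (N.choose m : ℤ) * (j : ℤ) ^ m)
      = (-1) ^ j * (k.choose j : ℤ) * ((j : ℤ) + 1) ^ N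
        - (-1) ^ j * (k.choose j : ℤ) * (j : ℤ) ^ N := by
    intro j _
    rw [binom_sum]
    ring
  rw [Finset.sum_congr rfl h2, Finset.sum_sub_distrib]
  rw [show ∑ j ∈ range (k+1), (-1:ℤ)^j * (k.choose j : ℤ) * ((j:ℤ)+1)^N = Ee k N from rfl,
    show ∑ j ∈ range (k+1), (-1:ℤ)^j * (k.choose j : ℤ) * (j:ℤ)^N = Dd k N from rfl,
    show Ee k N = Dd k N - Dd (k + 1) N from by rw [Dd_succ]; ring]
  ring

private lemma A_rec (M : ℕ) :
    ∑ m ∈ range (M + 2), ((M + 2).choose m : ℚ) *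
      (∑ k ∈ range (m + 1), (Dd k m : ℚ) / ((k : ℚ) + 1)) = 0 := by
  have hext : ∀ m ∈ range (M + 2),
      ((M + 2).choose m : ℚ) * (∑ k ∈ range (m + 1), (Dd k m : ℚ) / ((k : ℚ) + 1))
      = ((M + 2).choose m : ℚ) * (∑ k ∈ range (M + 2), (Dd k m : ℚ) / ((k : ℚ) + 1)) := by
    intro m hm
    rw [Finset.mem_range] at hm
    have heq : ∑ k ∈ range (M + 2), (Dd k m : ℚ) / ((k : ℚ) + 1)
        = ∑ k ∈ range (m + 1), (Dd k m : ℚ) / ((k : ℚ) + 1) := by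
      refine (Finset.sum_subset (Finset.range_subset_range.mpr (by omega : m + 1 ≤ M + 2)) ?_).symm
      intro k _ hk
      rw [Finset.mem_range, not_lt] at hk
      rw [Dd_eq_zero (by omega : m < k), Int.cast_zero, zero_div]
    rw [heq]
  rw [Finset.sum_congr rfl hext]
  have hswap : ∑ m ∈ range (M + 2), ((M + 2).choose m : ℚ) *
      (∑ k ∈ range (M + 2), (Dd k m : ℚ) / ((k : ℚ) + 1))
      = ∑ k ∈ range (M + 2), (∑ m ∈ range (M + 2), ((M + 2).choose m : ℚ) * (Dd k m : ℚ))
          / ((k : ℚ) + 1) := by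
    simp only [Finset.mul_sum, Finset.sum_div]
    rw [Finset.sum_comm]
    exact Finset.sum_congr rfl fun k _ => Finset.sum_congr rfl fun m _ => by ring
  rw [hswap]
  have hterm : ∀ k ∈ range (M + 2),
      (∑ m ∈ range (M + 2), ((M + 2).choose m : ℚ) * (Dd k m : ℚ)) / ((k : ℚ) + 1)
      = (Dd k (M + 1) : ℚ) - (Dd (k + 1) (M + 1) : ℚ) := by
    intro k _
    have h := innerSumD (M + 2) k
    have h' : ∑ m ∈ range (M + 2), ((M + 2).choose m : ℚ) * (Dd k m : ℚ)
        = ((-Dd (k + 1) (M + 2) : ℤ) : ℚ) := by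
      rw [← h]; push_cast; ring
    rw [h', Dd_succ_succ k (M + 1),
      show Ee k (M + 1) = Dd k (M + 1) - Dd (k + 1) (M + 1) from by rw [Dd_succ]; ring]
    have hk : ((k : ℚ) + 1) ≠ 0 := by positivity
    push_cast
    field_simp
  rw [Finset.sum_congr rfl hterm]
  have := Finset.sum_range_sub' (fun k => (Dd k (M + 1) : ℚ)) (M + 2)
  rw [this, Dd_eq_zero (by omega : M + 1 < M + 2)]
  have : Dd 0 (M + 1) = 0 := by simp [Dd]
  rw [this]
  simp

private lemma bernoulli_eq_D (n : ℕ) :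
    bernoulli n = ∑ k ∈ range (n + 1), (Dd k n : ℚ) / ((k : ℚ) + 1) := by
  induction n using Nat.strong_induction_on with
  | _ n ih =>
    match n with
    | 0 => norm_num [Dd, bernoulli_zero, Finset.sum_range_succ]
    | 1 => norm_num [Dd, bernoulli_one, Finset.sum_range_succ]
    | (m + 2) =>
      have hB := sum_bernoulli (m + 3)
      rw [if_neg (by omega)] at hB
      rw [Finset.sum_range_succ] at hB
      have hA := A_rec (m + 1)
      rw [show m + 1 + 2 = m + 3 from rfl, Finset.sum_range_succ] at hA
      have hsame : ∑ x ∈ range (m + 2), ((m + 3).choose x : ℚ) * bernoulli x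
          = ∑ x ∈ range (m + 2), ((m + 3).choose x : ℚ) *
              (∑ k ∈ range (x + 1), (Dd k x : ℚ) / ((k : ℚ) + 1)) := by
        refine Finset.sum_congr rfl fun x hx => ?_
        rw [Finset.mem_range] at hx
        rw [ih x (by omega)]
      rw [hsame] at hB
      have hc : ((m + 3).choose (m + 2) : ℚ) ≠ 0 := by
        simp [Nat.choose_succ_self_right]
        positivity
      have := sub_eq_zero.mpr (hB.trans hA.symm)
      rw [add_sub_add_left_eq_sub, ← mul_sub] at this
      rcases mul_eq_zero.mp this with h | h
      · exact absurd h hc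
      · exact sub_eq_zero.mp h

private lemma choose_zmod (p : ℕ) (hp : p.Prime) : ∀ j, j ≤ p - 1 →
    (((p - 1).choose j : ℕ) : ZMod p) = (-1) ^ j := by
  haveI : Fact p.Prime := ⟨hp⟩
  intro j
  induction j with
  | zero => simp
  | succ j ih =>
    intro hj
    have hj' : j ≤ p - 1 := by omega
    have hpge : 2 ≤ p := hp.two_le
    have key : (p - 1).choose (j + 1) * (j + 1) = (p - 1).choose j * (p - 1 - j) :=
      Nat.choose_succ_right_eq _ _
    have keyZ : (((p - 1).choose (j + 1) : ℕ) : ZMod p) * ((j : ZMod p) + 1)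
        = (((p - 1).choose j : ℕ) : ZMod p) * (((p - 1 - j : ℕ) : ℕ) : ZMod p) := by
      have := congrArg (Nat.cast : ℕ → ZMod p) key
      push_cast at this
      convert this using 2
    have hsub : (((p - 1 - j : ℕ) : ℕ) : ZMod p) = -((j : ZMod p) + 1) := by
      have h1 : p - 1 - j = p - (j + 1) := by omega
      rw [h1, Nat.cast_sub (by omega : j + 1 ≤ p)]
      simp
    have hne : ((j : ZMod p) + 1) ≠ 0 := by
      have : (((j + 1 : ℕ)) : ZMod p) ≠ 0 := by
        rw [Ne, ZMod.natCast_eq_zero_iff]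
        intro hdvd
        have := Nat.le_of_dvd (by omega) hdvd
        omega
      simpa using this
    have : (((p - 1).choose (j + 1) : ℕ) : ZMod p) * ((j : ZMod p) + 1)
        = ((-1) ^ (j + 1)) * ((j : ZMod p) + 1) := by
      rw [keyZ, hsub, ih hj']
      ring
    exact mul_right_cancel₀ hne this

private lemma Dd_cast_zmod (p n : ℕ) (hp : p.Prime) :
    ((Dd (p - 1) n : ℤ) : ZMod p) = ∑ j ∈ range p, (j : ZMod p) ^ n := by
  haveI : Fact p.Prime := ⟨hp⟩
  have h1 : p - 1 + 1 = p := by have := hp.two_le; omega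
  rw [Dd]
  push_cast
  rw [h1]
  refine Finset.sum_congr rfl fun j hj => ?_
  rw [Finset.mem_range] at hj
  rw [choose_zmod p hp j (by omega)]
  have : (-1 : ZMod p) ^ j * (-1 : ZMod p) ^ j = 1 := by
    rw [← mul_pow]; norm_num
  calc (-1 : ZMod p) ^ j * (-1 : ZMod p) ^ j * (j : ZMod p) ^ n
      = ((-1 : ZMod p) ^ j * (-1 : ZMod p) ^ j) * (j : ZMod p) ^ n := by ring
    _ = (j : ZMod p) ^ n := by rw [this, one_mul]

private lemma sum_range_zmod {M : Type*} [AddCommMonoid M] (p : ℕ) [NeZero p]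
    (f : ZMod p → M) : ∑ j ∈ range p, f (j : ZMod p) = ∑ x : ZMod p, f x := by
  refine Finset.sum_nbij' (fun j => (j : ZMod p)) (fun x => x.val) ?_ ?_ ?_ ?_ ?_
  · intro a _; exact Finset.mem_univ _
  · intro x _; exact Finset.mem_range.mpr (ZMod.val_lt x)
  · intro a ha; exact ZMod.val_cast_of_lt (Finset.mem_range.mp ha)
  · intro x _; exact ZMod.natCast_rightInverse x
  · intro a _; rfl

private lemma sum_pow_dvd (p n : ℕ) (hp : p.Prime) (hn : 1 ≤ n) (h : (p - 1) ∣ n) :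
    ∑ j ∈ range p, (j : ZMod p) ^ n = -1 := by
  haveI : Fact p.Prime := ⟨hp⟩
  have hcong : ∀ j ∈ range p, (j : ZMod p) ^ n = 1 - (if j = 0 then 1 else 0) := by
    intro j hj
    rw [Finset.mem_range] at hj
    by_cases h0 : j = 0
    · subst h0; simp [zero_pow (by omega : n ≠ 0)]
    · rw [if_neg h0, sub_zero]
      have hne : (j : ZMod p) ≠ 0 := by
        rw [Ne, ZMod.natCast_eq_zero_iff]
        intro hdvd
        have := Nat.le_of_dvd (by omega) hdvd
        omega
      obtain ⟨t, rfl⟩ := h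
      rw [pow_mul, ZMod.pow_card_sub_one_eq_one hne, one_pow]
  rw [Finset.sum_congr rfl hcong, Finset.sum_sub_distrib, Finset.sum_const, Finset.card_range,
    Finset.sum_ite_eq' (range p) 0 (fun _ => (1 : ZMod p)),
    if_pos (Finset.mem_range.mpr hp.pos)]
  simp [ZMod.natCast_self]

private lemma sum_pow_not_dvd (p n : ℕ) (hp : p.Prime) (hn : 1 ≤ n) (h : ¬(p - 1) ∣ n) :
    ∑ j ∈ range p, (j : ZMod p) ^ n = 0 := by
  haveI : Fact p.Prime := ⟨hp⟩
  have hp3 : 3 ≤ p := by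
    rcases hp.two_le.lt_or_eq with h2 | h2
    · omega
    · exfalso; apply h; rw [← h2]; simp
  set r := n % (p - 1) with hr
  have hrlt : r < p - 1 := Nat.mod_lt _ (by omega)
  have hrne : r ≠ 0 := fun h0 => h (Nat.dvd_of_mod_eq_zero h0)
  have hcong : ∀ j ∈ range p, (j : ZMod p) ^ n = (j : ZMod p) ^ r := by
    intro j hj
    rw [Finset.mem_range] at hj
    by_cases h0 : j = 0
    · subst h0
      simp [zero_pow (by omega : n ≠ 0), zero_pow hrne]
    · have hne : (j : ZMod p) ≠ 0 := by
        rw [Ne, ZMod.natCast_eq_zero_iff]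
        intro hdvd
        have := Nat.le_of_dvd (by omega) hdvd
        omega
      conv_lhs => rw [← Nat.div_add_mod n (p - 1)]
      rw [pow_add, pow_mul, ZMod.pow_card_sub_one_eq_one hne, one_pow, one_mul]
  rw [Finset.sum_congr rfl hcong, sum_range_zmod p (fun x => x ^ r)]
  exact FiniteField.sum_pow_lt_card_sub_one (K := ZMod p) r (by rw [ZMod.card]; omega)

private lemma mul_dvd_fact {a b N : ℕ} (h0 : 0 < a) (hab : a < b) (hbN : b ≤ N) :
    a * b ∣ Nat.factorial N := by
  obtain ⟨m, rfl⟩ : ∃ m, b = m + 1 := ⟨b - 1, by omega⟩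
  have h1 : a ∣ Nat.factorial m := Nat.dvd_factorial h0 (by omega)
  have h2 : a * (m + 1) ∣ Nat.factorial (m + 1) := by
    rw [Nat.factorial_succ, mul_comm (m + 1)]
    exact mul_dvd_mul h1 dvd_rfl
  exact h2.trans (Nat.factorial_dvd_factorial hbN)

private lemma composite_dvd_fact {m : ℕ} (h2 : 2 ≤ m) (hnp : ¬m.Prime) (h4 : m ≠ 4) :
    m ∣ Nat.factorial (m - 1) := by
  have hm1 : m ≠ 1 := by omega
  set p := m.minFac with hp'
  have hp : p.Prime := Nat.minFac_prime hm1
  obtain ⟨c, hc⟩ := Nat.minFac_dvd m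
  have hc0 : c ≠ 0 := by rintro rfl; omega
  have hc1 : c ≠ 1 := by rintro rfl; rw [mul_one] at hc; exact hnp (hc ▸ hp)
  have hpc : p ≤ c := Nat.minFac_le_of_dvd (by omega) ⟨p, by rw [hc]; ring⟩
  have hcm : c < m := by
    have := hp.two_le
    calc c < 2 * c := by omega
    _ ≤ p * c := Nat.mul_le_mul_right c this
    _ = m := hc.symm
  rcases hpc.lt_or_eq with h | h
  · have := mul_dvd_fact hp.pos h (by omega : c ≤ m - 1)
    rwa [← hc] at this
  · have hp2 : p ≠ 2 := by
      rintro h2'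
      apply h4
      have e : m.minFac = 2 := h2'
      have ec : c = 2 := h.symm.trans h2'
      subst ec
      omega
    have hp3 : 3 ≤ p := by have := hp.two_le; omega
    have hpp : m = p * p := by rw [hc, ← hp', h]
    have h3p : 3 * p ≤ p * p := Nat.mul_le_mul_right p hp3
    have hd := mul_dvd_fact (a := p) (b := 2 * p) hp.pos (by omega) (by omega : 2 * p ≤ m - 1)
    have : m ∣ p * (2 * p) := ⟨2, by rw [hpp]; ring⟩
    exact this.trans hd

private lemma Dd_three (n : ℕ) (hn : 2 ≤ n) (hne : Even n) : (4 : ℤ) ∣ Dd 3 n := by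
  have hD : Dd 3 n = -3 + 3 * 2 ^ n - 3 ^ n := by
    rw [Dd]
    rw [Finset.sum_range_succ, Finset.sum_range_succ, Finset.sum_range_succ,
      Finset.sum_range_one]
    norm_num [zero_pow (by omega : n ≠ 0)]
    ring
  have key : ((Dd 3 n : ℤ) : ZMod 4) = 0 → (4 : ℤ) ∣ Dd 3 n := by
    intro h
    exact_mod_cast (ZMod.intCast_zmod_eq_zero_iff_dvd (Dd 3 n) 4).mp h
  apply key
  rw [hD]
  push_cast
  obtain ⟨t, rfl⟩ : ∃ t, n = 2 * t := hne.exists_two_nsmul n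
  have h2 : (2 : ZMod 4) ^ (2 * t) = 0 := by
    have ht : 1 ≤ t := by omega
    obtain ⟨s, rfl⟩ : ∃ s, t = s + 1 := ⟨t - 1, by omega⟩
    rw [show 2 * (s + 1) = 2 * s + 2 from by ring, pow_add,
      show (2 : ZMod 4) ^ 2 = 0 from by decide, mul_zero]
  have h3 : (3 : ZMod 4) ^ (2 * t) = 1 := by
    rw [pow_mul, show (3 : ZMod 4) ^ 2 = 1 from by decide, one_pow]
  rw [h2, h3]
  decide

private lemma term_int (n k : ℕ) (hn2 : 2 ≤ n) (hne : Even n) :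
    ∃ z : ℤ, (Dd k n : ℚ) / ((k : ℚ) + 1)
      + (if (k + 1).Prime ∧ k ∣ n then 1 / ((k : ℚ) + 1) else 0) = z := by
  have hkne : ((k : ℚ) + 1) ≠ 0 := by positivity
  by_cases hp : (k + 1).Prime
  · haveI : Fact (k + 1).Prime := ⟨hp⟩
    have hk1 : (k + 1) - 1 = k := by omega
    by_cases hd : k ∣ n
    · have h1 : ((Dd k n : ℤ) : ZMod (k + 1)) = -1 := by
        have hcast := Dd_cast_zmod (k + 1) n hp
        rw [hk1] at hcast
        rw [hcast, sum_pow_dvd (k + 1) n hp (by omega) (by rwa [hk1])]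
      have h2 : ((k : ℤ) + 1) ∣ (Dd k n + 1) := by
        have : (((Dd k n + 1 : ℤ)) : ZMod (k + 1)) = 0 := by push_cast; rw [h1]; ring
        have := (ZMod.intCast_zmod_eq_zero_iff_dvd _ (k + 1)).mp this
        exact_mod_cast this
      obtain ⟨z, hz⟩ := h2
      refine ⟨z, ?_⟩
      rw [if_pos ⟨hp, hd⟩, ← add_div]
      have : (Dd k n : ℚ) + 1 = ((k : ℚ) + 1) * (z : ℚ) := by exact_mod_cast congrArg (Int.cast : ℤ → ℚ) hz
      rw [this]
      exact mul_div_cancel_left₀ _ hkne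
    · have h1 : ((Dd k n : ℤ) : ZMod (k + 1)) = 0 := by
        have hcast := Dd_cast_zmod (k + 1) n hp
        rw [hk1] at hcast
        rw [hcast, sum_pow_not_dvd (k + 1) n hp (by omega) (by rwa [hk1])]
      have h2 : ((k : ℤ) + 1) ∣ Dd k n := by
        have := (ZMod.intCast_zmod_eq_zero_iff_dvd _ (k + 1)).mp h1
        exact_mod_cast this
      obtain ⟨z, hz⟩ := h2
      refine ⟨z, ?_⟩
      rw [if_neg (fun hh => hd hh.2), add_zero]
      have : (Dd k n : ℚ) = ((k : ℚ) + 1) * (z : ℚ) := by exact_mod_cast congrArg (Int.cast : ℤ → ℚ) hz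
      rw [this]
      exact mul_div_cancel_left₀ _ hkne
  · rw [if_neg (fun hh => hp hh.1), add_zero]
    have h2 : ((k : ℤ) + 1) ∣ Dd k n := by
      rcases Nat.eq_zero_or_pos k with rfl | hk0
      · simp [Dd, zero_pow (by omega : n ≠ 0)]
      by_cases hk4 : k = 3
      · subst hk4
        exact_mod_cast Dd_three n hn2 hne
      · have hdvd : (k + 1) ∣ Nat.factorial k := by
          have := composite_dvd_fact (m := k + 1) (by omega) hp (by omega)
          simpa using this
        have : ((k + 1 : ℕ) : ℤ) ∣ (Nat.factorial k : ℤ) := Int.natCast_dvd_natCast.mpr hdvd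
        exact dvd_trans (by exact_mod_cast this) (factorial_dvd_Dd n k)
    obtain ⟨z, hz⟩ := h2
    refine ⟨z, ?_⟩
    have : (Dd k n : ℚ) = ((k : ℚ) + 1) * (z : ℚ) := by exact_mod_cast congrArg (Int.cast : ℤ → ℚ) hz
    rw [this]
    exact mul_div_cancel_left₀ _ hkne


/-- **von Staudt–Clausen.** For every even integer `n ≥ 2`, the rational number
`B n + ∑_{p prime, (p-1) ∣ n} 1/p` is an integer. (Any prime `p` with `p - 1 ∣ n`
satisfies `p ≤ n + 1`, so the sum may be taken over `p < n + 2`.) -/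
theorem vonStaudt_Clausen (n : ℕ) (hn : 2 ≤ n) (hne : Even n) :
    ∃ z : ℤ,
      bernoulli n +
        ∑ p ∈ (Finset.range (n + 2)).filter (fun p => p.Prime ∧ (p - 1) ∣ n),
          (1 : ℚ) / p = z := by
  have hsum : ∑ p ∈ (Finset.range (n + 2)).filter (fun p => p.Prime ∧ (p - 1) ∣ n), (1 : ℚ) / p
      = ∑ k ∈ range (n + 1), (if (k + 1).Prime ∧ k ∣ n then 1 / ((k : ℚ) + 1) else 0) := by
    rw [← Finset.sum_filter]
    refine Finset.sum_nbij' (fun p => p - 1) (fun k => k + 1) ?_ ?_ ?_ ?_ ?_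
    · intro p hp
      simp only [Finset.mem_filter, Finset.mem_range] at hp ⊢
      obtain ⟨hplt, hpp, hpd⟩ := hp
      have h2 : 2 ≤ p := hpp.two_le
      refine ⟨?_, ?_, hpd⟩
      · have : p - 1 ≤ n := Nat.le_of_dvd (by omega) hpd
        omega
      · rw [show p - 1 + 1 = p from by omega]; exact hpp
    · intro k hk
      simp only [Finset.mem_filter, Finset.mem_range] at hk ⊢
      obtain ⟨hklt, hkp, hkd⟩ := hk
      exact ⟨by omega, hkp, by simpa using hkd⟩
    · intro p hp
      simp only [Finset.mem_filter, Finset.mem_range] at hp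
      have := hp.2.1.two_le
      show p - 1 + 1 = p
      omega
    · intro k _; show k + 1 - 1 = k; omega
    · intro p hp
      simp only [Finset.mem_filter, Finset.mem_range] at hp
      have h2 : 2 ≤ p := hp.2.1.two_le
      rw [show ((p - 1 : ℕ) : ℚ) + 1 = (p : ℚ) from by
        push_cast [Nat.cast_sub (by omega : 1 ≤ p)]; ring]
  rw [bernoulli_eq_D n, hsum, ← Finset.sum_add_distrib]
  choose g hg using fun k => term_int n k hn hne
  refine ⟨∑ k ∈ range (n + 1), g k, ?_⟩
  rw [Finset.sum_congr rfl (fun k _ => hg k)]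
  push_cast
  ring
end
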